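/- Merging adversaries does not rule out any attacks: for every set of communication rules R and every initial state of knowledge k_0, Merge(f*_R(k_0)) ⊆ f*_{Merge(R)}(Merge(k_0)). -/

import Mathlib

open scoped Classical

/-- A communication rule `(p_b, v, p_a, k_a)`. -/
abbrev Rule (P V : Type*) := P × V × P × Set (P × V)

/-- The knowledge-update operator
`f_R(k) = k ∪ {(p_a, v) : ∃ p_b k_a, (p_b, v) ∈ k, k_a ⊆ k, (p_b, v, p_a, k_a) ∈ R}`. -/
def fR {P V : Type*} (R : Set (Rule P V)) (k : Set (P × V)) : Set (P × V) :=
  k ∪ {pv | ∃ pb ka, (pb, pv.2) ∈ k ∧ ka ⊆ k ∧ (pb, pv.2, pv.1, ka) ∈ R}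

/-- `Knowledge(k) = {v : (p, v) ∈ k for some p}`. -/
def Knowledge {P V : Type*} (k : Set (P × V)) : Set V := {v | ∃ p, (p, v) ∈ k}

/-- The maximal state of knowledge `f*_R(k₀) = ⋃ₙ f_R^n(k₀)`. -/
def fStar {P V : Type*} (R : Set (Rule P V)) (k0 : Set (P × V)) : Set (P × V) :=
  ⋃ n, (fR R)^[n] k0

/-- `R(k₀)`: the rules applicable to the initial knowledge. -/
def Rres {P V : Type*} (R : Set (Rule P V)) (k0 : Set (P × V)) : Set (Rule P V) :=
  {r ∈ R | r.2.1 ∈ Knowledge k0 ∧ ∀ v, (r.2.2.1, v) ∈ r.2.2.2 → v ∈ Knowledge k0}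

/-- Merge the adversary set `O` into the designated adversary `o`. -/
noncomputable def mergeP {P : Type*} (O : Set P) (o : P) (p : P) : P :=
  if p ∈ O then o else p

/-- Merge applied to a state of knowledge. -/
noncomputable def mergeK {P V : Type*} (O : Set P) (o : P) (k : Set (P × V)) :
    Set (P × V) :=
  (fun pv => (mergeP O o pv.1, pv.2)) '' k

/-- Merge applied to a set of rules. -/
noncomputable def mergeR {P V : Type*} (O : Set P) (o : P) (R : Set (Rule P V)) :
    Set (Rule P V) :=
  (fun r => (mergeP O o r.1, r.2.1, mergeP O o r.2.2.1, mergeK O o r.2.2.2)) '' R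

lemma mergeK_mono {P V : Type*} (O : Set P) (o : P) {k k' : Set (P × V)}
    (h : k ⊆ k') : mergeK O o k ⊆ mergeK O o k' :=
  Set.image_mono h

lemma fR_mono {P V : Type*} (R : Set (Rule P V)) {k k' : Set (P × V)}
    (h : k ⊆ k') : fR R k ⊆ fR R k' := by
  rintro pv (hpv | ⟨pb, ka, h1, h2, h3⟩)
  · exact Or.inl (h hpv)
  · exact Or.inr ⟨pb, ka, h h1, h2.trans h, h3⟩

lemma merge_fR {P V : Type*} (R : Set (Rule P V)) (O : Set P) (o : P)
    (k : Set (P × V)) :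
    mergeK O o (fR R k) ⊆ fR (mergeR O o R) (mergeK O o k) := by
  rintro _ ⟨⟨pa, v⟩, (hpv | ⟨pb, ka, h1, h2, h3⟩), rfl⟩
  · exact Or.inl ⟨(pa, v), hpv, rfl⟩
  · refine Or.inr ⟨mergeP O o pb, mergeK O o ka, ⟨(pb, v), h1, rfl⟩,
      mergeK_mono O o h2, ⟨(pb, v, pa, ka), h3, rfl⟩⟩

/-- merging adversaries does not rule out any attacks. -/
theorem merge_fStar {P V : Type*} (R : Set (Rule P V)) (k0 : Set (P × V))
    (O : Set P) (o : P) (ho : o ∈ O) :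
    mergeK O o (fStar R k0) ⊆ fStar (mergeR O o R) (mergeK O o k0) := by
  have key : ∀ n, mergeK O o ((fR R)^[n] k0) ⊆
      (fR (mergeR O o R))^[n] (mergeK O o k0) := by
    intro n
    induction n with
    | zero => simp
    | succ n ih =>
      rw [Function.iterate_succ_apply', Function.iterate_succ_apply']
      exact (merge_fR R O o _).trans (fR_mono _ ih)
  rintro pv ⟨qv, hq, rfl⟩
  obtain ⟨s, ⟨n, rfl⟩, hn⟩ := hq
  exact Set.mem_iUnion.2 ⟨n, key n ⟨qv, hn, rfl⟩⟩
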